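/- arXiv:2402.19199 — 2 statements merged into one kernel-verified Lean document; each statement's English description precedes it below -/
import Mathlib

section
/- The inference system ReC→ = Sup ∪ {Rw→} admits equational derivability (ED): for every set of equations 𝒞, every equation l ≃ r, every substitution θ and every clause D[lθ], if D[lθ] is derivable (with some position annotation) from 𝒞 in ReC→, then D[lθ ↦ rθ] is derivable (with some position annotation) from 𝒞 ∪ {l ≃ r} in ReC→. -/
namespace RewInd

/-- First-order terms over variables `V` and function symbols `F`. -/
inductive Trm (V F : Type) : Type
  | var : V → Trm V F
  | app : F → List (Trm V F) → Trm V F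

variable {V F : Type}

/-- A substitution maps variables to terms. -/
abbrev Subst (V F : Type) := V → Trm V F

namespace Trm

/-- Apply a substitution homomorphically to a term. -/
def subst (θ : Subst V F) : Trm V F → Trm V F
  | var v => θ v
  | app f ts => app f (ts.attach.map fun t => subst θ t.1)
  decreasing_by
    have := List.sizeOf_lt_of_mem t.2
    simp only [Trm.app.sizeOf_spec]
    omega

/-- A term is ground if it contains no variables. -/
inductive Ground : Trm V F → Prop
  | app {f : F} {ts : List (Trm V F)} : (∀ t ∈ ts, Ground t) → Ground (app f ts)

/-- Whether a term is a variable. -/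
def isVar : Trm V F → Prop
  | var _ => True
  | app _ _ => False

/-- The multiset of variable occurrences of a term. -/
def varsM : Trm V F → Multiset V
  | var v => {v}
  | app _ ts => (ts.attach.map fun t => varsM t.1).sum
  decreasing_by
    have := List.sizeOf_lt_of_mem t.2
    simp only [Trm.app.sizeOf_spec]
    omega

end Trm

/-- Composition of substitutions: apply `θ` first, then `η`. -/
def Subst.comp (θ η : Subst V F) : Subst V F := fun v => (θ v).subst η

/-- The substitution replacing only the variable `x` by the term `t`. -/
def Subst.single [DecidableEq V] (x : V) (t : Trm V F) : Subst V F :=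
  fun v => if v = x then t else Trm.var v

/-- Positions: finite sequences of argument indices addressing subterm occurrences. -/
abbrev Pos := List ℕ

/-- `PosLeft p q` (`p <ₗ q`): position `p` is to the left of position `q`. -/
def PosLeft (p q : Pos) : Prop :=
  ∃ (r : Pos) (i j : ℕ) (p' q' : Pos), i < j ∧ p = r ++ i :: p' ∧ q = r ++ j :: q'

namespace Trm

/-- `SubtermAt t p s`: the term `t` has the subterm `s` at position `p`. -/
inductive SubtermAt : Trm V F → Pos → Trm V F → Prop
  | here (t : Trm V F) : SubtermAt t [] t
  | app {f : F} {ts : List (Trm V F)} {i : ℕ} {t s : Trm V F} {p : Pos} :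
      ts[i]? = some t → SubtermAt t p s → SubtermAt (app f ts) (i :: p) s

/-- `s` is a subterm of `t` (`s ⊴ t`). -/
def Subterm (s t : Trm V F) : Prop := ∃ p, SubtermAt t p s

/-- `s` is a strict subterm of `t` (`s ◁ t`). -/
def StrictSubterm (s t : Trm V F) : Prop := ∃ p, p ≠ [] ∧ SubtermAt t p s

/-- `ReplP a b p s t`: the term `s` has an occurrence of `a` at position `p`, and `t` is
the result of replacing this occurrence by `b`. -/
inductive ReplP (a b : Trm V F) : Pos → Trm V F → Trm V F → Prop
  | here : ReplP a b [] a b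
  | app {f : F} {ts : List (Trm V F)} {i : ℕ} {t t' : Trm V F} {p : Pos} :
      ts[i]? = some t → ReplP a b p t t' →
      ReplP a b (i :: p) (app f ts) (app f (ts.set i t'))

/-- `t` is obtained from `s` by replacing one occurrence of `a` by `b`. -/
def Repl (a b s t : Trm V F) : Prop := ∃ p, ReplP a b p s t

end Trm

/-- Literals: equations `s ≃ t` and disequations `s ≄ t`. -/
inductive Lit (V F : Type) : Type
  | pos : Trm V F → Trm V F → Lit V F
  | neg : Trm V F → Trm V F → Lit V F

namespace Lit

def subst (θ : Subst V F) : Lit V F → Lit V F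
  | pos s t => pos (s.subst θ) (t.subst θ)
  | neg s t => neg (s.subst θ) (t.subst θ)

/-- The complement of a literal. -/
def compl : Lit V F → Lit V F
  | pos s t => neg s t
  | neg s t => pos s t

def Ground : Lit V F → Prop
  | pos s t => s.Ground ∧ t.Ground
  | neg s t => s.Ground ∧ t.Ground

def varsM : Lit V F → Multiset V
  | pos s t => s.varsM + t.varsM
  | neg s t => s.varsM + t.varsM

/-- The literal with polarity `b` (`true` = equation, `false` = disequation) and sides `s`, `t`. -/
def sided (b : Bool) (s t : Trm V F) : Lit V F := if b then pos s t else neg s t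

/-- `L` is the literal `s ⋈ t` of polarity `b`, where (dis)equations are symmetric in their
two sides. -/
def HasShape (L : Lit V F) (b : Bool) (s t : Trm V F) : Prop :=
  L = sided b s t ∨ L = sided b t s

/-- Replacement of one occurrence of `a` by `b` at a position inside a literal:
position `0` addresses the left-hand side, position `1` the right-hand side. -/
inductive ReplP (a b : Trm V F) : Pos → Lit V F → Lit V F → Prop
  | posL {s s' t : Trm V F} {p : Pos} :
      Trm.ReplP a b p s s' → ReplP a b (0 :: p) (pos s t) (pos s' t)
  | posR {s t t' : Trm V F} {p : Pos} :
      Trm.ReplP a b p t t' → ReplP a b (1 :: p) (pos s t) (pos s t')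
  | negL {s s' t : Trm V F} {p : Pos} :
      Trm.ReplP a b p s s' → ReplP a b (0 :: p) (neg s t) (neg s' t)
  | negR {s t t' : Trm V F} {p : Pos} :
      Trm.ReplP a b p t t' → ReplP a b (1 :: p) (neg s t) (neg s t')

def Repl (a b : Trm V F) (L L' : Lit V F) : Prop := ∃ p, ReplP a b p L L'

/-- `SubtermAt L p u`: the literal `L` has the subterm `u` at position `p`. -/
inductive SubtermAt : Lit V F → Pos → Trm V F → Prop
  | posL {s t u : Trm V F} {p : Pos} : Trm.SubtermAt s p u → SubtermAt (pos s t) (0 :: p) u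
  | posR {s t u : Trm V F} {p : Pos} : Trm.SubtermAt t p u → SubtermAt (pos s t) (1 :: p) u
  | negL {s t u : Trm V F} {p : Pos} : Trm.SubtermAt s p u → SubtermAt (neg s t) (0 :: p) u
  | negR {s t u : Trm V F} {p : Pos} : Trm.SubtermAt t p u → SubtermAt (neg s t) (1 :: p) u

end Lit

/-- Clauses are finite multisets of literals. -/
abbrev Clause (V F : Type) := Multiset (Lit V F)

namespace Clause

def subst (θ : Subst V F) (C : Clause V F) : Clause V F := C.map (Lit.subst θ)

def Ground (C : Clause V F) : Prop := ∀ L ∈ C, L.Ground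

def varsM (C : Clause V F) : Multiset V := (C.map Lit.varsM).sum

/-- `ReplP a b q C D`: the clause `D` is obtained from `C` by replacing one occurrence
of `a` at clause position `q` by `b` (the head of `q` addresses a literal of the clause). -/
def ReplP (a b : Trm V F) (q : Pos) (C D : Clause V F) : Prop :=
  ∃ (ls : List (Lit V F)) (i : ℕ) (L L' : Lit V F) (p : Pos),
    q = i :: p ∧ C = (ls : Multiset (Lit V F)) ∧ ls[i]? = some L ∧
    Lit.ReplP a b p L L' ∧ D = ((ls.set i L' : List (Lit V F)) : Multiset (Lit V F))

/-- `D` is obtained from `C` by replacing one occurrence of `a` by `b`. -/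
def Repl (a b : Trm V F) (C D : Clause V F) : Prop := ∃ q, ReplP a b q C D

end Clause

/-- The unit clause `l ≃ r`. -/
def eqn (l r : Trm V F) : Clause V F := {Lit.pos l r}

/-- `E` is the equation `l ≃ r`; equations are symmetric in their sides. -/
def IsEqnOf (E : Clause V F) (l r : Trm V F) : Prop := E = eqn l r ∨ E = eqn r l

/-- `E` is a (unit) equation. -/
def IsEqn (E : Clause V F) : Prop := ∃ l r, E = eqn l r

/-- The (Dershowitz–Manna) multiset extension of an ordering: `N` is greater than `M`. -/
def MulExt {α : Type*} (r : α → α → Prop) (N M : Multiset α) : Prop :=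
  ∃ X Y Z, N = Z + Y ∧ M = Z + X ∧ Y ≠ 0 ∧ ∀ x ∈ X, ∃ y ∈ Y, r y x

/-- Encoding of a literal as a multiset of terms, for the ordering extension. -/
def Lit.ms : Lit V F → Multiset (Trm V F)
  | .pos s t => {s, t}
  | .neg s t => {s, s, t, t}

/-- Extension of the term ordering to literals. -/
def LitGT (succ : Trm V F → Trm V F → Prop) (L M : Lit V F) : Prop := MulExt succ L.ms M.ms

/-- Extension of the term ordering to clauses. -/
def ClauseGT (succ : Trm V F → Trm V F → Prop) (C D : Clause V F) : Prop :=
  MulExt (LitGT succ) C D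

/-- `a ⪰ b`. -/
def SuccEq (succ : Trm V F → Trm V F → Prop) (a b : Trm V F) : Prop := succ a b ∨ a = b

/-- `succ` is a simplification ordering (total on ground terms). -/
structure SimpOrd (succ : Trm V F → Trm V F → Prop) : Prop where
  trans : ∀ {a b c : Trm V F}, succ a b → succ b c → succ a c
  irrefl : ∀ a : Trm V F, ¬ succ a a
  wf : WellFounded fun a b : Trm V F => succ b a
  total_ground : ∀ {s t : Trm V F}, s.Ground → t.Ground → succ s t ∨ s = t ∨ succ t s
  subst_mono : ∀ {l r : Trm V F} (θ : Subst V F), succ l r → succ (l.subst θ) (r.subst θ)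
  ctx_mono : ∀ {l r s s' : Trm V F} {p : Pos}, succ l r → Trm.ReplP l r p s s' → succ s s'

/-- `θ` is a unifier of `s` and `t`. -/
def IsUnifier (θ : Subst V F) (s t : Trm V F) : Prop := s.subst θ = t.subst θ

/-- `θ` is a most general unifier of `s` and `t`. -/
def IsMGU (θ : Subst V F) (s t : Trm V F) : Prop :=
  IsUnifier θ s t ∧ ∀ η, IsUnifier η s t → ∃ μ, ∀ v, η v = (θ v).subst μ

/-- The superposition calculus `Sup` (rules Sup, EqRes, EqFac). -/
inductive SupInf (succ : Trm V F → Trm V F → Prop) : List (Clause V F) → Clause V F → Prop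
  | sup {C D C' D' : Clause V F} {L M : Lit V F} {b : Bool} {s t u l r s' : Trm V F}
      {p : Pos} {θ : Subst V F} :
      C = L ::ₘ C' → L.HasShape b s t →
      D = M ::ₘ D' → M.HasShape true l r →
      ¬ u.isVar → Trm.ReplP u r p s s' → IsMGU θ l u →
      ¬ SuccEq succ (r.subst θ) (l.subst θ) → ¬ SuccEq succ (t.subst θ) (s.subst θ) →
      SupInf succ [C, D] (Clause.subst θ (Lit.sided b s' t ::ₘ (C' + D')))
  | eqres {C C' : Clause V F} {L : Lit V F} {s t : Trm V F} {θ : Subst V F} :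
      C = L ::ₘ C' → L.HasShape false s t → IsMGU θ s t →
      SupInf succ [C] (Clause.subst θ C')
  | eqfac {C C' : Clause V F} {L M : Lit V F} {s t u w : Trm V F} {θ : Subst V F} :
      C = L ::ₘ M ::ₘ C' → L.HasShape true s t → M.HasShape true u w → IsMGU θ s u →
      ¬ SuccEq succ (t.subst θ) (s.subst θ) → ¬ SuccEq succ (w.subst θ) (t.subst θ) →
      SupInf succ [C] (Clause.subst θ (Lit.sided true s t ::ₘ Lit.sided false t w ::ₘ C'))

/-- The unconstrained rewriting rule (Rw): from `C[lθ]` and `l ≃ r` derive `C[lθ ↦ rθ]`. -/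
def RwInf : List (Clause V F) → Clause V F → Prop := fun Ps D =>
  ∃ (C E : Clause V F) (l r : Trm V F) (θ : Subst V F),
    Ps = [C, E] ∧ IsEqnOf E l r ∧ Clause.Repl (l.subst θ) (r.subst θ) C D

/-- Derivability of a clause from a set of clauses in an inference system given as a
relation between lists of premises and conclusions. -/
inductive Derives {α : Type*} (I : List α → α → Prop) (S : Set α) : α → Prop
  | ax {C} : C ∈ S → Derives I S C
  | inf {Ps C} : (∀ P ∈ Ps, Derives I S P) → I Ps C → Derives I S C

/-- An inference system admits equational derivability (ED). -/
def AdmitsED (I : List (Clause V F) → Clause V F → Prop) : Prop :=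
  ∀ S : Set (Clause V F), (∀ C ∈ S, IsEqn C) →
    ∀ (l r : Trm V F) (θ : Subst V F) (D D' : Clause V F),
      Derives I S D → Clause.Repl (l.subst θ) (r.subst θ) D D' →
      Derives I (S ∪ {eqn l r}) D'

/-- Annotate every clause of a set with the empty position `ε`. -/
def annEps (S : Set (Clause V F)) : Set (Clause V F × Pos) :=
  {P | P.1 ∈ S ∧ P.2 = ([] : Pos)}

/-- Lift an inference system to position-annotated clauses: the conclusion is
annotated with the empty position `ε`. -/
def LiftEps (I : List (Clause V F) → Clause V F → Prop) :
    List (Clause V F × Pos) → (Clause V F × Pos) → Prop := fun Ps C =>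
  I (Ps.map Prod.fst) C.1 ∧ C.2 = ([] : Pos)

/-- The rule Rw→: from `C[lθ]_q` with position annotation `p` and equation `l ≃ r`,
provided `q ≮ₗ p`, derive `C[lθ ↦ rθ]` with position annotation `q`. -/
def RwArrInf : List (Clause V F × Pos) → (Clause V F × Pos) → Prop := fun Ps D =>
  ∃ (C E : Clause V F) (p pE : Pos) (l r : Trm V F) (θ : Subst V F) (q : Pos),
    Ps = [(C, p), (E, pE)] ∧ IsEqnOf E l r ∧ ¬ PosLeft q p ∧
    Clause.ReplP (l.subst θ) (r.subst θ) q C D.1 ∧ D.2 = q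

/-- The calculus ReC→ = Sup ∪ {Rw→}. -/
def ReCarr (succ : Trm V F → Trm V F → Prop) :
    List (Clause V F × Pos) → (Clause V F × Pos) → Prop := fun Ps C =>
  LiftEps (SupInf succ) Ps C ∨ RwArrInf Ps C

/-! ### Auxiliary lemmas for ED of ReC→ -/

section EDAux

variable {V F : Type}

lemma posLeft_nil_right (q : Pos) : ¬ PosLeft q [] := by
  rintro ⟨r, i, j, p', q', hij, hp, hq⟩
  exact absurd hq.symm (by simp)

lemma posLeft_nil_left (q : Pos) : ¬ PosLeft [] q := by
  rintro ⟨r, i, j, p', q', hij, hp, hq⟩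
  exact absurd hp.symm (by simp)

lemma posLeft_cons_iff {i j : ℕ} {p q : Pos} :
    PosLeft (i :: p) (j :: q) ↔ i < j ∨ (i = j ∧ PosLeft p q) := by
  constructor
  · rintro ⟨r, a, b, p', q', hab, hp, hq⟩
    cases r with
    | nil =>
      simp only [List.nil_append, List.cons.injEq] at hp hq
      exact Or.inl (by omega)
    | cons c r' =>
      simp only [List.cons_append, List.cons.injEq] at hp hq
      exact Or.inr ⟨hp.1.trans hq.1.symm, r', a, b, p', q', hab, hp.2, hq.2⟩
  · rintro (h | ⟨rfl, r, a, b, p', q', hab, hp, hq⟩)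
    · exact ⟨[], i, j, p, q, h, rfl, rfl⟩
    · exact ⟨i :: r, a, b, p', q', hab, by simp [hp], by simp [hq]⟩

lemma posLeft_asymm : ∀ {p q : Pos}, PosLeft p q → ¬ PosLeft q p := by
  intro p
  induction p with
  | nil => exact fun h => absurd h (posLeft_nil_left _)
  | cons i p ih =>
    intro q h h'
    cases q with
    | nil => exact posLeft_nil_right _ h
    | cons j q =>
      rcases posLeft_cons_iff.1 h with h1 | ⟨rfl, h1⟩
      · rcases posLeft_cons_iff.1 h' with h2 | ⟨h2, _⟩ <;> omega
      · rcases posLeft_cons_iff.1 h' with h2 | ⟨_, h2⟩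
        · omega
        · exact ih h1 h2

lemma coe_eq_cons_of_getElem? {α : Type*} :
    ∀ (ls : List α) (i : ℕ) (L : α), ls[i]? = some L →
      ((ls : Multiset α) = L ::ₘ (ls.eraseIdx i : List α) ∧
        ∀ L', ((ls.set i L' : List α) : Multiset α) = L' ::ₘ (ls.eraseIdx i : List α)) := by
  intro ls
  induction ls with
  | nil => intro i L h; simp at h
  | cons a tl ih =>
    intro i L h
    cases i with
    | zero =>
      simp only [List.getElem?_cons_zero, Option.some.injEq] at h
      subst h
      simp [List.eraseIdx, ← Multiset.cons_coe]
    | succ n =>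
      simp only [List.getElem?_cons_succ] at h
      obtain ⟨h1, h2⟩ := ih n L h
      constructor
      · rw [← Multiset.cons_coe, h1]
        simp [List.eraseIdx, ← Multiset.cons_coe, Multiset.cons_swap]
      · intro L'
        simp only [List.set]
        rw [← Multiset.cons_coe, h2 L']
        simp [List.eraseIdx, ← Multiset.cons_coe, Multiset.cons_swap]

lemma insertIdx_facts {α : Type*} :
    ∀ (i : ℕ) (ls : List α) (a : α), i ≤ ls.length →
      ((ls.insertIdx i a)[i]? = some a ∧
        (∀ b, (ls.insertIdx i a).set i b = ls.insertIdx i b) ∧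
        ((ls.insertIdx i a : List α) : Multiset α) = a ::ₘ (ls : Multiset α)) := by
  intro i
  induction i with
  | zero => intro ls a _; simp [List.insertIdx_zero, ← Multiset.cons_coe]
  | succ n ih =>
    intro ls a h
    cases ls with
    | nil => simp at h
    | cons c tl =>
      simp only [List.length_cons, Nat.succ_le_succ_iff] at h
      obtain ⟨h1, h2, h3⟩ := ih tl a h
      refine ⟨?_, ?_, ?_⟩
      · simpa [List.insertIdx_succ_cons] using h1
      · intro b
        rw [List.insertIdx_succ_cons, List.insertIdx_succ_cons, List.set_cons_succ, h2 b]
      · rw [List.insertIdx_succ_cons, ← Multiset.cons_coe, h3, ← Multiset.cons_coe,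
          Multiset.cons_swap]

/-- Destruct a clause-level replacement into a cons decomposition. -/
lemma Clause.replP_elim {a b : Trm V F} {q : Pos} {C D : Clause V F}
    (h : Clause.ReplP a b q C D) :
    ∃ (i : ℕ) (p : Pos) (M M' : Lit V F) (C0 : Clause V F),
      q = i :: p ∧ i < Multiset.card C ∧ C = M ::ₘ C0 ∧ D = M' ::ₘ C0 ∧
        Lit.ReplP a b p M M' := by
  obtain ⟨ls, i, L, L', p, hq, hC, hget, hrep, hD⟩ := h
  obtain ⟨h1, h2⟩ := coe_eq_cons_of_getElem? ls i L hget
  have hlen : i < ls.length := by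
    rcases List.getElem?_eq_some_iff.1 hget with ⟨h, _⟩
    exact h
  exact ⟨i, p, L, L', (ls.eraseIdx i : List (Lit V F)), hq,
    by rw [hC, Multiset.coe_card]; exact hlen, by rw [hC, h1], by rw [hD, h2 L'], hrep⟩

/-- Build a clause-level replacement from a cons decomposition, at any valid index. -/
lemma Clause.replP_intro {a b : Trm V F} {p : Pos} {M M' : Lit V F} (C0 : Clause V F)
    (i : ℕ) (hi : i ≤ Multiset.card C0) (h : Lit.ReplP a b p M M') :
    Clause.ReplP a b (i :: p) (M ::ₘ C0) (M' ::ₘ C0) := by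
  obtain ⟨h1, h2, h3⟩ := insertIdx_facts i C0.toList M
    (by rw [Multiset.length_toList]; exact hi)
  refine ⟨C0.toList.insertIdx i M, i, M, M', p, rfl, ?_, h1, h, ?_⟩
  · rw [h3, Multiset.coe_toList]
  · rw [h2 M', (insertIdx_facts i C0.toList M'
      (by rw [Multiset.length_toList]; exact hi)).2.2, Multiset.coe_toList]

/-- Term-level commutation of replacements at parallel positions. -/
lemma Trm.replP_comm :
    ∀ (r : Pos) {i j : ℕ} {p1 p2 : Pos} {x y a b s s2 m : Trm V F},
      i ≠ j →
      Trm.ReplP x y (r ++ j :: p1) s s2 → Trm.ReplP a b (r ++ i :: p2) s2 m →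
      ∃ s', Trm.ReplP a b (r ++ i :: p2) s s' ∧ Trm.ReplP x y (r ++ j :: p1) s' m := by
  intro r
  induction r with
  | nil =>
    intro i j p1 p2 x y a b s s2 m hij h1 h2
    rw [List.nil_append] at h1 h2 ⊢
    cases h1 with
    | @app f ts _ t t' _ hget1 h1' =>
      cases h2 with
      | @app _ _ _ u u' _ hget2 h2' =>
        rw [List.getElem?_set_ne (Ne.symm hij)] at hget2
        refine ⟨Trm.app f (ts.set i u'), Trm.ReplP.app hget2 h2', ?_⟩
        have : (ts.set i u').set j t' = (ts.set j t').set i u' :=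
          List.set_comm _ _ hij
        rw [← this]
        exact Trm.ReplP.app (by rw [List.getElem?_set_ne hij]; exact hget1) h1'
  | cons c r' ih =>
    intro i j p1 p2 x y a b s s2 m hij h1 h2
    rw [List.cons_append] at h1 h2 ⊢
    cases h1 with
    | @app f ts _ u u2 _ hget1 h1' =>
      cases h2 with
      | @app _ _ _ w m' _ hget2 h2' =>
        have hlen : c < ts.length := by
          rcases List.getElem?_eq_some_iff.1 hget1 with ⟨h, _⟩
          exact h
        rw [List.getElem?_set_eq_of_lt _ hlen] at hget2
        obtain rfl : u2 = w := by injection hget2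
        obtain ⟨u'', hA, hB⟩ := ih hij h1' h2'
        refine ⟨Trm.app f (ts.set c u''), Trm.ReplP.app hget1 hA, ?_⟩
        have h4 : (ts.set c u'').set c m' = (ts.set c u2).set c m' := by
          rw [List.set_set, List.set_set]
        rw [← h4]
        exact Trm.ReplP.app (List.getElem?_set_eq_of_lt _ (by simpa using hlen)) hB

/-- Literal-level commutation of replacements when the second is to the left
of the first. -/
lemma Lit.replP_comm {x y a b : Trm V F} {p1 p2 : Pos} {L L2 M' : Lit V F}
    (h1 : Lit.ReplP x y p1 L L2) (h2 : Lit.ReplP a b p2 L2 M')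
    (hlt : PosLeft p2 p1) :
    ∃ L'', Lit.ReplP a b p2 L L'' ∧ Lit.ReplP x y p1 L'' M' := by
  have comm : ∀ {q1 q2 : Pos} {s s2 m : Trm V F}, PosLeft q2 q1 →
      Trm.ReplP x y q1 s s2 → Trm.ReplP a b q2 s2 m →
      ∃ s', Trm.ReplP a b q2 s s' ∧ Trm.ReplP x y q1 s' m := by
    rintro q1 q2 s s2 m ⟨r, i, j, p', q', hij, hq2, hq1⟩ hs1 hs2
    subst hq1; subst hq2
    exact Trm.replP_comm r (by omega) hs1 hs2
  cases h1 with
  | posL ht1 =>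
    cases h2 with
    | posL ht2 =>
      rcases posLeft_cons_iff.1 hlt with h | ⟨_, h⟩
      · omega
      obtain ⟨s', hA, hB⟩ := comm h ht1 ht2
      exact ⟨_, Lit.ReplP.posL hA, Lit.ReplP.posL hB⟩
    | posR ht2 =>
      rcases posLeft_cons_iff.1 hlt with h | ⟨h, _⟩ <;> omega
  | posR ht1 =>
    cases h2 with
    | posL ht2 =>
      exact ⟨_, Lit.ReplP.posL ht2, Lit.ReplP.posR ht1⟩
    | posR ht2 =>
      rcases posLeft_cons_iff.1 hlt with h | ⟨_, h⟩
      · omega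
      obtain ⟨s', hA, hB⟩ := comm h ht1 ht2
      exact ⟨_, Lit.ReplP.posR hA, Lit.ReplP.posR hB⟩
  | negL ht1 =>
    cases h2 with
    | negL ht2 =>
      rcases posLeft_cons_iff.1 hlt with h | ⟨_, h⟩
      · omega
      obtain ⟨s', hA, hB⟩ := comm h ht1 ht2
      exact ⟨_, Lit.ReplP.negL hA, Lit.ReplP.negL hB⟩
    | negR ht2 =>
      rcases posLeft_cons_iff.1 hlt with h | ⟨h, _⟩ <;> omega
  | negR ht1 =>
    cases h2 with
    | negL ht2 =>
      exact ⟨_, Lit.ReplP.negL ht2, Lit.ReplP.negR ht1⟩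
    | negR ht2 =>
      rcases posLeft_cons_iff.1 hlt with h | ⟨_, h⟩
      · omega
      obtain ⟨s', hA, hB⟩ := comm h ht1 ht2
      exact ⟨_, Lit.ReplP.negR hA, Lit.ReplP.negR hB⟩

lemma Derives.mono {α : Type*} {I : List α → α → Prop} {S T : Set α} (hST : S ⊆ T) :
    ∀ {C : α}, Derives I S C → Derives I T C := by
  intro C h
  induction h with
  | ax h => exact Derives.ax (hST h)
  | inf _ hinf ih => exact Derives.inf ih hinf

/-- Perform one Rw→ step on derivable clauses. -/
lemma derives_rw {succ : Trm V F → Trm V F → Prop} {T : Set (Clause V F × Pos)}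
    {D : Clause V F} {p : Pos} {E : Clause V F} {pE : Pos} {l0 r0 : Trm V F}
    {θ0 : Subst V F}
    (hD : Derives (ReCarr succ) T (D, p)) (hE : Derives (ReCarr succ) T (E, pE))
    (heq : IsEqnOf E l0 r0) {q : Pos} {D' : Clause V F}
    (hnl : ¬ PosLeft q p) (hrep : Clause.ReplP (l0.subst θ0) (r0.subst θ0) q D D') :
    Derives (ReCarr succ) T (D', q) := by
  refine Derives.inf (Ps := [(D, p), (E, pE)]) ?_
    (Or.inr ⟨D, E, p, pE, l0, r0, θ0, q, rfl, heq, hnl, hrep, rfl⟩)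
  intro P hP
  simp only [List.mem_cons, List.mem_singleton, List.not_mem_nil, or_false] at hP
  rcases hP with rfl | rfl
  · exact hD
  · exact hE

/-- The key lemma: a single rewrite step with `l ≃ r` can be inserted into a
ReC→-derivation, yielding an annotation whose head is a valid literal index and
which is compatible with any later rewrite that had the original annotation
below it and is to the right of the inserted position. -/
lemma main_ED {succ : Trm V F → Trm V F → Prop} {S : Set (Clause V F)}
    (l r : Trm V F) (θ : Subst V F) {Dp : Clause V F × Pos}
    (h : Derives (ReCarr succ) (annEps S) Dp) :
    ∀ (M : Lit V F) (D0 : Clause V F) (p2 : Pos) (M' : Lit V F),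
      Dp.1 = M ::ₘ D0 → Lit.ReplP (l.subst θ) (r.subst θ) p2 M M' →
      ∃ k t, Derives (ReCarr succ) (annEps (S ∪ {eqn l r})) (M' ::ₘ D0, k :: t) ∧
        k < Multiset.card Dp.1 ∧
        ∀ j' t', j' < Multiset.card Dp.1 → ¬ PosLeft (j' :: t') Dp.2 →
          PosLeft p2 t' → ¬ PosLeft (j' :: t') (k :: t) := by
  have hsub : annEps S ⊆ annEps (S ∪ {eqn l r}) := by
    rintro ⟨C, p⟩ ⟨h1, h2⟩
    exact ⟨Or.inl h1, h2⟩
  have hEax : Derives (ReCarr succ) (annEps (S ∪ {eqn l r})) (eqn l r, []) :=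
    Derives.ax ⟨Or.inr rfl, rfl⟩
  -- the generic "direct insertion" construction
  have direct : ∀ (D : Clause V F) (p : Pos),
      Derives (ReCarr succ) (annEps (S ∪ {eqn l r})) (D, p) →
      ∀ (M : Lit V F) (D0 : Clause V F) (p2 : Pos) (M' : Lit V F) (k : ℕ),
        D = M ::ₘ D0 → Lit.ReplP (l.subst θ) (r.subst θ) p2 M M' →
        k ≤ Multiset.card D0 → ¬ PosLeft (k :: p2) p →
        Derives (ReCarr succ) (annEps (S ∪ {eqn l r})) (M' ::ₘ D0, k :: p2) := by
    intro D p hD M D0 p2 M' k hDeq hM' hk hnl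
    subst hDeq
    exact derives_rw hD hEax (Or.inl rfl) hnl (Clause.replP_intro D0 k hk hM')
  induction h with
  | ax hmem =>
    intro M D0 p2 M' hDp hM'
    obtain ⟨h1, h2⟩ := hmem
    refine ⟨0, p2, ?_, by simp [hDp], ?_⟩
    · exact direct _ _ (Derives.ax ⟨Or.inl h1, h2⟩) M D0 p2 M' 0 hDp hM'
        (Nat.zero_le _) (h2 ▸ posLeft_nil_right _)
    · intro j' t' _ _ h3 h4
      rcases posLeft_cons_iff.1 h4 with h5 | ⟨_, h5⟩
      · omega
      · exact posLeft_asymm h3 h5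
  | @inf Ps Dp hps hinf ih =>
    intro M D0 p2 M' hDp hM'
    have hDT : Derives (ReCarr succ) (annEps (S ∪ {eqn l r})) Dp :=
      Derives.mono hsub (Derives.inf hps hinf)
    rcases hinf with ⟨_, hp2⟩ | ⟨C, E, pC, pE, l0, r0, θ0, q, hPs, hE, hnlq, hrep, hq⟩
    · -- Sup step: annotation is ε
      refine ⟨0, p2, ?_, by simp [hDp], ?_⟩
      · exact direct Dp.1 Dp.2 (by rwa [Prod.mk.eta]) M D0 p2 M' 0 hDp hM'
          (Nat.zero_le _) (hp2 ▸ posLeft_nil_right _)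
      · intro j' t' _ _ h3 h4
        rcases posLeft_cons_iff.1 h4 with h5 | ⟨_, h5⟩
        · omega
        · exact posLeft_asymm h3 h5
    · -- Rw→ step
      obtain ⟨j, p1, L, L2, C0, hq2, hjlt, hC, hD1, hLrep⟩ := Clause.replP_elim hrep
      have hcard : Multiset.card Dp.1 = Multiset.card C := by
        rw [hD1, hC]; simp
      by_cases hst : PosLeft p2 p1
      · -- stuck case: recurse into the premise
        have hCprem : Derives (ReCarr succ) (annEps S) (C, pC) :=
          hps (C, pC) (by rw [hPs]; exact List.mem_cons_self)
        have hEprem : Derives (ReCarr succ) (annEps (S ∪ {eqn l r})) (E, pE) :=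
          Derives.mono hsub (hps (E, pE) (by rw [hPs]; simp))
        have hnlq' : ¬ PosLeft (j :: p1) pC := hq2 ▸ hnlq
        have hcons : L2 ::ₘ C0 = M ::ₘ D0 := by rw [← hD1, hDp]
        rcases Multiset.cons_eq_cons.1 hcons with ⟨hLM, hC0⟩ | ⟨_, cs, hcs1, hcs2⟩
        · -- same literal slot: commute inside the literal
          obtain ⟨L'', hA, hB⟩ := Lit.replP_comm hLrep (hLM ▸ hM') hst
          obtain ⟨k, t, hder, hk, hNL⟩ :=
            ih (C, pC) (by rw [hPs]; exact List.mem_cons_self) L C0 p2 L'' hC hA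
          have hnl2 : ¬ PosLeft (j :: p1) (k :: t) :=
            hNL j p1 (by simpa using hjlt) hnlq' hst
          have hrw : Derives (ReCarr succ) (annEps (S ∪ {eqn l r}))
              (M' ::ₘ C0, j :: p1) :=
            derives_rw hder hEprem hE hnl2 (Clause.replP_intro C0 j
              (by have h5 := hjlt; rw [hC] at h5;
                  simp only [Multiset.card_cons] at h5; omega) hB)
          refine ⟨j, p1, by rwa [hC0] at hrw, by rw [hcard]; exact hjlt, ?_⟩
          intro j' t' _ h2 _
          rw [hq, hq2] at h2
          exact h2
        · -- different literal slots
          have hC' : C = M ::ₘ (L ::ₘ cs) := by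
            rw [hC, hcs1, Multiset.cons_swap]
          obtain ⟨k, t, hder, hk, hNL⟩ :=
            ih (C, pC) (by rw [hPs]; exact List.mem_cons_self) M (L ::ₘ cs) p2 M'
              hC' hM'
          have hnl2 : ¬ PosLeft (j :: p1) (k :: t) :=
            hNL j p1 (by simpa using hjlt) hnlq' hst
          have hder' : Derives (ReCarr succ) (annEps (S ∪ {eqn l r}))
              (L ::ₘ (M' ::ₘ cs), k :: t) := by
            rwa [Multiset.cons_swap] at hder
          have hjle : j ≤ Multiset.card (M' ::ₘ cs) := by
            have h5 := hjlt
            rw [hC'] at h5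
            simp only [Multiset.card_cons] at h5 ⊢
            omega
          have hrw : Derives (ReCarr succ) (annEps (S ∪ {eqn l r}))
              (L2 ::ₘ (M' ::ₘ cs), j :: p1) :=
            derives_rw hder' hEprem hE hnl2 (Clause.replP_intro (M' ::ₘ cs) j hjle hLrep)
          refine ⟨j, p1, ?_, by rw [hcard]; exact hjlt, ?_⟩
          · rwa [hcs2, Multiset.cons_swap]
          · intro j' t' _ h2 _
            rw [hq, hq2] at h2
            exact h2
      · -- non-stuck: insert directly above this step
        have hjle : j ≤ Multiset.card D0 := by
          have h5 : j < Multiset.card Dp.1 := by rw [hcard]; exact hjlt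
          rw [hDp] at h5
          simp only [Multiset.card_cons] at h5
          omega
        have hnl3 : ¬ PosLeft (j :: p2) Dp.2 := by
          rw [hq, hq2]
          intro h4
          rcases posLeft_cons_iff.1 h4 with h5 | ⟨_, h5⟩
          · omega
          · exact hst h5
        refine ⟨j, p2, ?_, by rw [hcard]; exact hjlt, ?_⟩
        · exact direct Dp.1 Dp.2 (by rwa [Prod.mk.eta]) M D0 p2 M' j hDp hM' hjle hnl3
        · intro j' t' _ h2 h3 h4
          rw [hq, hq2] at h2
          rcases posLeft_cons_iff.1 h4 with h5 | ⟨rfl, h5⟩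
          · exact h2 (posLeft_cons_iff.2 (Or.inl h5))
          · exact posLeft_asymm h3 h5

end EDAux

/-- The inference system ReC→ = Sup ∪ {Rw→} admits equational
derivability (ED): for every set of equations `𝒞` (annotated `ε`), equation `l ≃ r`,
substitution `θ` and clause `D[lθ]` derivable with some position annotation from `𝒞`
in ReC→, the clause `D[lθ ↦ rθ]` is derivable with some position annotation from
`𝒞 ∪ {l ≃ r}` in ReC→. -/
theorem ReCarr_admitsED {V F : Type} (succ : Trm V F → Trm V F → Prop)
    (hsucc : SimpOrd succ) :
    ∀ S : Set (Clause V F), (∀ C ∈ S, IsEqn C) →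
      ∀ (l r : Trm V F) (θ : Subst V F) (D D' : Clause V F) (p : Pos),
        Derives (ReCarr succ) (annEps S) (D, p) →
        Clause.Repl (l.subst θ) (r.subst θ) D D' →
        ∃ p' : Pos, Derives (ReCarr succ) (annEps (S ∪ {eqn l r})) (D', p') := by
  intro S _hS l r θ D D' p hder hrepl
  obtain ⟨q, hq⟩ := hrepl
  obtain ⟨i, p2, M, M', C0, _, _, hC, hD', hM'⟩ := Clause.replP_elim hq
  obtain ⟨k, t, hd, _, _⟩ := main_ED l r θ hder M C0 p2 M' (by simpa using hC) hM'
  exact ⟨k :: t, by rwa [← hD'] at hd⟩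

end RewInd
end

section
/- Linearization of rewrite derivations: Let 𝒞 be a set of clauses and D a clause. If D is derivable from 𝒞 using only Rw inferences (where the equations used for rewriting may themselves have been derived from 𝒞 by Rw inferences), then there is a derivation of D of linear form: a sequence of clauses C₁, C₂, …, Cₙ, D such that C₁ ∈ 𝒞 and each clause in the sequence after C₁ is obtained from its predecessor by a single Rw inference whose rewriting equation l_i ≃ r_i belongs to 𝒞. -/
namespace RewInd

variable {V F : Type}

/-- One Rw rewriting step whose rewriting equation belongs to `𝒞`. -/
def RwStepWith (𝒞 : Set (Clause V F)) (X Y : Clause V F) : Prop :=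
  ∃ (E : Clause V F) (l r : Trm V F) (θ : Subst V F),
    E ∈ 𝒞 ∧ IsEqnOf E l r ∧ Clause.Repl (l.subst θ) (r.subst θ) X Y
section AuxLemmas

theorem list_set_getElem' {α : Type*} (l : List α) (i : ℕ) (h : i < l.length) :
    l.set i l[i] = l := by
  apply List.ext_getElem?; intro n
  by_cases hn : n = i <;> simp [hn, List.getElem?_set, h, List.getElem?_eq_getElem h]

theorem Trm.subst_app (σ : Subst V F) (f : F) (ts : List (Trm V F)) :
    (Trm.app f ts).subst σ = Trm.app f (ts.map (fun t => t.subst σ)) := by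
  rw [Trm.subst]
  congr 1
  exact List.attach_map_val

theorem Trm.subst_subst (θ η : Subst V F) :
    ∀ t : Trm V F, (t.subst θ).subst η = t.subst (Subst.comp θ η)
  | .var v => by simp [Trm.subst, Subst.comp]
  | .app f ts => by
      rw [Trm.subst_app, Trm.subst_app, Trm.subst_app, List.map_map]
      congr 1
      refine List.map_congr_left fun t ht => ?_
      have := List.sizeOf_lt_of_mem ht
      exact Trm.subst_subst θ η t
  termination_by t => sizeOf t
  decreasing_by simp only [Trm.app.sizeOf_spec]; omega

theorem Trm.ReplP.subst {a b : Trm V F} {p : Pos} {s t : Trm V F} (σ : Subst V F)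
    (h : Trm.ReplP a b p s t) :
    Trm.ReplP (a.subst σ) (b.subst σ) p (s.subst σ) (t.subst σ) := by
  induction h with
  | here => exact .here
  | app hget _ ih =>
      rw [Trm.subst_app, Trm.subst_app, List.map_set]
      exact Trm.ReplP.app (by rw [List.getElem?_map, hget]; rfl) ih

theorem Trm.ReplP.symm {a b : Trm V F} {p : Pos} {s t : Trm V F}
    (h : Trm.ReplP a b p s t) : Trm.ReplP b a p t s := by
  induction h with
  | here => exact .here
  | @app f ts i t t' p hget _ ih =>
      obtain ⟨hi, hts⟩ := List.getElem?_eq_some_iff.mp hget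
      have h1 : (ts.set i t')[i]? = some t' := List.getElem?_set_self hi
      have h2 : (ts.set i t').set i t = ts := by
        rw [List.set_set, ← hts]; exact list_set_getElem' ts i hi
      have := Trm.ReplP.app (f := f) h1 ih
      rwa [h2] at this

theorem Trm.ReplP.factor {u v : Trm V F} {q : Pos} {s s' : Trm V F}
    (h : Trm.ReplP u v q s s') (w : Trm V F) :
    ∃ s₀, Trm.ReplP u w q s s₀ ∧ Trm.ReplP w v q s₀ s' := by
  induction h with
  | here => exact ⟨w, .here, .here⟩
  | @app f ts i t t' p hget _ ih =>
      obtain ⟨t₀, h1, h2⟩ := ih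
      obtain ⟨hi, _⟩ := List.getElem?_eq_some_iff.mp hget
      refine ⟨.app f (ts.set i t₀), Trm.ReplP.app hget h1, ?_⟩
      have h3 : (ts.set i t₀)[i]? = some t₀ := List.getElem?_set_self hi
      have := Trm.ReplP.app (f := f) h3 h2
      rwa [List.set_set] at this

theorem Trm.ReplP.comp {x y a a' : Trm V F} {p q : Pos} {s s' : Trm V F}
    (h1 : Trm.ReplP x y p a a') (h2 : Trm.ReplP a a' q s s') :
    Trm.ReplP x y (q ++ p) s s' := by
  induction h2 with
  | here => exact h1
  | app hget _ ih => exact Trm.ReplP.app hget ih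

theorem Lit.ReplP.factor {u v : Trm V F} {q : Pos} {L L' : Lit V F}
    (h : Lit.ReplP u v q L L') (w : Trm V F) :
    ∃ L₀, Lit.ReplP u w q L L₀ ∧ Lit.ReplP w v q L₀ L' := by
  cases h with
  | posL h => obtain ⟨s₀, h1, h2⟩ := h.factor w; exact ⟨_, .posL h1, .posL h2⟩
  | posR h => obtain ⟨s₀, h1, h2⟩ := h.factor w; exact ⟨_, .posR h1, .posR h2⟩
  | negL h => obtain ⟨s₀, h1, h2⟩ := h.factor w; exact ⟨_, .negL h1, .negL h2⟩
  | negR h => obtain ⟨s₀, h1, h2⟩ := h.factor w; exact ⟨_, .negR h1, .negR h2⟩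

theorem Lit.ReplP.comp {x y a a' : Trm V F} {p q : Pos} {L L' : Lit V F}
    (h1 : Trm.ReplP x y p a a') (h2 : Lit.ReplP a a' q L L') :
    ∃ q', Lit.ReplP x y q' L L' := by
  cases h2 with
  | posL h => exact ⟨_, .posL (h1.comp h)⟩
  | posR h => exact ⟨_, .posR (h1.comp h)⟩
  | negL h => exact ⟨_, .negL (h1.comp h)⟩
  | negR h => exact ⟨_, .negR (h1.comp h)⟩

theorem Clause.Repl.factor {u v : Trm V F} {C D : Clause V F}
    (h : Clause.Repl u v C D) (w : Trm V F) :
    ∃ C₀, Clause.Repl u w C C₀ ∧ Clause.Repl w v C₀ D := by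
  obtain ⟨q, ls, i, L, L', p, hq, hC, hget, hlit, hD⟩ := h
  obtain ⟨L₀, h1, h2⟩ := hlit.factor w
  obtain ⟨hi, _⟩ := List.getElem?_eq_some_iff.mp hget
  refine ⟨((ls.set i L₀ : List (Lit V F)) : Multiset (Lit V F)),
    ⟨_, ls, i, L, L₀, p, rfl, hC, hget, h1, rfl⟩,
    ⟨_, ls.set i L₀, i, L₀, L', p, rfl, rfl,
      List.getElem?_set_self hi, h2, ?_⟩⟩
  rw [hD, List.set_set]

theorem Clause.Repl.comp {x y a a' : Trm V F} {p : Pos} {C D : Clause V F}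
    (h1 : Trm.ReplP x y p a a') (h2 : Clause.Repl a a' C D) :
    Clause.Repl x y C D := by
  obtain ⟨q, ls, i, L, L', p', hq, hC, hget, hlit, hD⟩ := h2
  obtain ⟨q', hlit'⟩ := Lit.ReplP.comp h1 hlit
  exact ⟨i :: q', ls, i, L, L', q', rfl, hC, hget, hlit', hD⟩

theorem IsEqnOf.symm {E : Clause V F} {l r : Trm V F} (h : IsEqnOf E l r) :
    IsEqnOf E r l := Or.symm h

/-- Structure of a rewriting step into a unit equation. -/
theorem step_into_eqn {a b : Trm V F} {E'' E' : Clause V F} {u v : Trm V F}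
    (h : Clause.Repl a b E'' E') (hE' : IsEqnOf E' u v) :
    (∃ s p, Trm.ReplP a b p s u ∧ IsEqnOf E'' s v) ∨
    (∃ t p, Trm.ReplP a b p t v ∧ IsEqnOf E'' u t) := by
  obtain ⟨q, ls, i, L, L', p, hq, hC, hget, hlit, hD⟩ := h
  have key : ∀ w₁ w₂ : Trm V F, E' = eqn w₁ w₂ →
      L' = Lit.pos w₁ w₂ ∧ E'' = ({L} : Multiset (Lit V F)) := by
    intro w₁ w₂ hE'
    have hls : ls.set i L' = [Lit.pos w₁ w₂] :=
      Multiset.coe_eq_singleton.mp (by rw [← hD, hE']; rfl)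
    have hlen : ls.length = 1 := by
      have := congrArg List.length hls; simpa [List.length_set] using this
    obtain ⟨L₀, rfl⟩ := List.length_eq_one_iff.mp hlen
    obtain ⟨hi, hL⟩ := List.getElem?_eq_some_iff.mp hget
    have hi0 : i = 0 := by simpa using hi
    subst hi0
    have hL0 : L₀ = L := by simpa using hL
    subst hL0
    refine ⟨by simpa using hls, by simpa using hC⟩
  rcases hE' with hE' | hE'
  · obtain ⟨hL', hE''⟩ := key u v hE'
    subst hL'
    cases hlit with
    | posL h => exact Or.inl ⟨_, _, h, Or.inl (by rw [hE'']; rfl)⟩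
    | posR h => exact Or.inr ⟨_, _, h, Or.inl (by rw [hE'']; rfl)⟩
  · obtain ⟨hL', hE''⟩ := key v u hE'
    subst hL'
    cases hlit with
    | posL h => exact Or.inr ⟨_, _, h, Or.inr (by rw [hE'']; rfl)⟩
    | posR h => exact Or.inl ⟨_, _, h, Or.inr (by rw [hE'']; rfl)⟩

/-- A rewrite with an equation reachable from `E ∈ 𝒞` by `RwStepWith 𝒞` steps
can be simulated by a chain of `RwStepWith 𝒞` steps. -/
theorem rw_with_derived_eqn {𝒞 : Set (Clause V F)} {E E' : Clause V F}
    (hE : E ∈ 𝒞) (hchain : Relation.ReflTransGen (RwStepWith 𝒞) E E') :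
    ∀ {u v : Trm V F} {θ' : Subst V F} {C D : Clause V F},
      IsEqnOf E' u v → Clause.Repl (u.subst θ') (v.subst θ') C D →
      Relation.ReflTransGen (RwStepWith 𝒞) C D := by
  induction hchain with
  | refl => exact fun hEq hrepl => .single ⟨E, _, _, _, hE, hEq, hrepl⟩
  | @tail E₂ E₃ _ hstep ih =>
      intro u v θ' C D hEq hrepl
      obtain ⟨E0, l, r, θ, hE0, hE0eq, hr0⟩ := hstep
      rcases step_into_eqn hr0 hEq with ⟨s, p, hterm, hE₂eq⟩ | ⟨t, p, hterm, hE₂eq⟩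
      · -- `u = s[lθ ↦ rθ]`: rewrite `C` backwards with `l ≃ r`, then use `E₂`.
        obtain ⟨C₀, h1, h2⟩ := hrepl.factor (s.subst θ')
        have hterm' := (hterm.subst θ').symm
        rw [Trm.subst_subst, Trm.subst_subst] at hterm'
        have hstep1 : RwStepWith 𝒞 C C₀ :=
          ⟨E0, r, l, Subst.comp θ θ', hE0, hE0eq.symm, Clause.Repl.comp hterm' h1⟩
        exact Relation.ReflTransGen.head hstep1 (ih hE₂eq h2)
      · -- `v = t[lθ ↦ rθ]`: use `E₂` first, then rewrite forwards with `l ≃ r`.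
        obtain ⟨C₀, h1, h2⟩ := hrepl.factor (t.subst θ')
        have hterm' := hterm.subst θ'
        rw [Trm.subst_subst, Trm.subst_subst] at hterm'
        have hstep2 : RwStepWith 𝒞 C₀ D :=
          ⟨E0, l, r, Subst.comp θ θ', hE0, hE0eq, Clause.Repl.comp hterm' h2⟩
        exact (ih hE₂eq h1).tail hstep2

end AuxLemmas

/-- **Linearization of rewrite derivations.**
If `D` is derivable from `𝒞` using only Rw inferences (where the equations used for
rewriting may themselves have been derived from `𝒞` by Rw inferences), then there is a
linear derivation of `D`: a clause `C₁ ∈ 𝒞` and a sequence of single Rw steps from `C₁`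
to `D`, each using a rewriting equation belonging to `𝒞`. -/
theorem linearization_of_rw_derivations {V F : Type}
    (𝒞 : Set (Clause V F)) (D : Clause V F)
    (hder : Derives (fun Ps C => RwInf Ps C) 𝒞 D) :
    ∃ C₁ ∈ 𝒞, Relation.ReflTransGen (RwStepWith 𝒞) C₁ D := by
  induction hder with
  | ax h => exact ⟨_, h, .refl⟩
  | inf hprem hinf ih =>
      obtain ⟨C, E, l, r, θ, hPs, hEeq, hrepl⟩ := hinf
      subst hPs
      obtain ⟨C₁, hC₁, hchainC⟩ := ih C (by simp)
      obtain ⟨E₁, hE₁, hchainE⟩ := ih E (by simp)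
      exact ⟨C₁, hC₁, hchainC.trans (rw_with_derived_eqn hE₁ hchainE hEeq hrepl)⟩

end RewInd
end
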